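/- arXiv:2304.03886 — 2 statements merged into one kernel-verified Lean document; each statement's English description precedes it below -/
import Mathlib

section
/- Let f(x) = (1/2)xᵀF x + pᵀx + r and φ(x) = (1/2)xᵀΦ x with F, Φ symmetric positive definite, μ_f I ⪯ F ⪯ L_f I, μ_φ I ⪯ Φ ⪯ L_φ I. With μ_φ̄ = 1/L_φ, L_φ̄ = 1/μ_φ and stepsize η = 2/(L_f L_φ̄ + μ_f μ_φ̄), the mirror descent iteration z_{k+1} = z_k − η∇f(∇φ̄(z_k)) (where φ̄(z) = (1/2)zᵀΦ⁻¹z) converges linearly to z^opt = ∇φ(x^opt), x^opt = −F⁻¹p, with rate ρ = (κ_f κ_φ̄ − 1)/(κ_f κ_φ̄ + 1), κ_f = L_f/μ_f, κ_φ̄ = L_φ̄/μ_φ̄: that is, there exists c > 0 with ‖z_k − z^opt‖ ≤ c ρ^k ‖z_0 − z^opt‖ for all k. -/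
open Matrix

section Aux

variable {n : Type*} [Fintype n]

private lemma herm_dot_comm (M : Matrix n n ℝ) (hM : M.IsHermitian) (a b : n → ℝ) :
    a ⬝ᵥ M *ᵥ b = b ⬝ᵥ M *ᵥ a := by
  have hMt : Mᵀ = M := by
    rw [← Matrix.conjTranspose_eq_transpose_of_trivial]; exact hM
  rw [dotProduct_mulVec, ← mulVec_transpose, hMt, dotProduct_comm]

private lemma amgm_dot (M : Matrix n n ℝ) (hsym : M.IsHermitian)
    (hpos : ∀ x, 0 ≤ x ⬝ᵥ M *ᵥ x) {t : ℝ} (ht : 0 < t) (a b : n → ℝ) :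
    2 * (a ⬝ᵥ M *ᵥ b) ≤ t * (a ⬝ᵥ M *ᵥ a) + (1 / t) * (b ⬝ᵥ M *ᵥ b) := by
  have h0 := hpos (t • a - b)
  have hexp : (t • a - b) ⬝ᵥ M *ᵥ (t • a - b)
      = t * t * (a ⬝ᵥ M *ᵥ a) - 2 * t * (a ⬝ᵥ M *ᵥ b) + (b ⬝ᵥ M *ᵥ b) := by
    rw [mulVec_sub, mulVec_smul]
    simp only [dotProduct_sub, sub_dotProduct, smul_dotProduct, dotProduct_smul,
      smul_eq_mul]
    rw [herm_dot_comm M hsym b a]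
    ring
  rw [hexp] at h0
  have ht' : t ≠ 0 := ne_of_gt ht
  rw [← sub_nonneg]
  have key : t * (a ⬝ᵥ M *ᵥ a) + 1 / t * (b ⬝ᵥ M *ᵥ b) - 2 * (a ⬝ᵥ M *ᵥ b)
      = (1 / t) * (t * t * (a ⬝ᵥ M *ᵥ a) - 2 * t * (a ⬝ᵥ M *ᵥ b) + (b ⬝ᵥ M *ᵥ b)) := by
    field_simp
    ring
  rw [key]
  exact mul_nonneg (by positivity) h0

private lemma herm_smul (c : ℝ) (M : Matrix n n ℝ) (h : M.IsHermitian) :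
    (c • M).IsHermitian := by
  have hMt : Mᵀ = M := by
    rw [← Matrix.conjTranspose_eq_transpose_of_trivial]; exact h
  simp [Matrix.IsHermitian, conjTranspose_smul, hMt]

private lemma psd_dot {M : Matrix n n ℝ} (hM : M.PosSemidef) (x : n → ℝ) :
    0 ≤ x ⬝ᵥ M *ᵥ x := by
  simpa using hM.dotProduct_mulVec_nonneg x

/-- The key contraction estimate: if `-ρ • P ⪯ G ⪯ ρ • P` (Loewner) with `P` positive
definite, then the `P⁻¹`-quadratic form of `G *ᵥ v` is at most `ρ ^ 2` times the
`P`-quadratic form of `v`. -/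
private lemma key_contraction [DecidableEq n] (P G : Matrix n n ℝ) (hP : P.PosDef)
    (hG : G.IsHermitian) (ρ : ℝ) (hρ : 0 ≤ ρ)
    (hB : ∀ x, 0 ≤ x ⬝ᵥ (ρ • P - G) *ᵥ x) (hC : ∀ x, 0 ≤ x ⬝ᵥ (ρ • P + G) *ᵥ x)
    (v : n → ℝ) :
    (G *ᵥ v) ⬝ᵥ P⁻¹ *ᵥ (G *ᵥ v) ≤ ρ ^ 2 * (v ⬝ᵥ P *ᵥ v) := by
  have hdet : IsUnit P.det := hP.det_pos.ne'.isUnit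
  set u : n → ℝ := P⁻¹ *ᵥ (G *ᵥ v) with hu
  have hPu : P *ᵥ u = G *ᵥ v := by
    rw [hu, mulVec_mulVec, Matrix.mul_nonsing_inv P hdet, one_mulVec]
  set q : ℝ := (G *ᵥ v) ⬝ᵥ u with hq
  -- u ⬝ᵥ P *ᵥ u = q
  have hq1 : u ⬝ᵥ P *ᵥ u = q := by rw [hPu, hq, dotProduct_comm]
  have hq2 : u ⬝ᵥ G *ᵥ v = q := by rw [hq, dotProduct_comm]
  have hBsym : (ρ • P - G).IsHermitian := ((herm_smul ρ P hP.isHermitian).sub hG)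
  have hCsym : (ρ • P + G).IsHermitian := ((herm_smul ρ P hP.isHermitian).add hG)
  have main : ∀ t : ℝ, 0 < t → 2 * q ≤ t * ρ * q + (1 / t) * ρ * (v ⬝ᵥ P *ᵥ v) := by
    intro t ht
    have hCineq := amgm_dot _ hCsym hC ht u v
    have hBineq := amgm_dot _ hBsym hB ht u (-v)
    simp only [sub_mulVec, add_mulVec, smul_mulVec, mulVec_neg, dotProduct_sub,
      dotProduct_add, dotProduct_smul, dotProduct_neg, neg_dotProduct, neg_neg,
      smul_eq_mul, mulVec_smul] at hCineq hBineq
    rw [hq1, hq2] at hCineq hBineq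
    linarith
  have hsq : ρ ^ 2 = ρ * ρ := sq ρ
  rcases eq_or_lt_of_le hρ with hρ0 | hρpos
  · have h := main 1 one_pos
    have hv := psd_dot hP.posSemidef v
    rw [← hρ0] at h ⊢
    simp only [mul_zero, zero_mul, mul_one, one_mul, add_zero, zero_add,
      ne_eq, OfNat.ofNat_ne_zero, not_false_eq_true, zero_pow] at h ⊢
    linarith
  · have h := main (1 / ρ) (by positivity)
    have hρ' : ρ ≠ 0 := ne_of_gt hρpos
    rw [one_div_one_div] at h
    have h1 : (1 / ρ) * ρ = 1 := by field_simp
    rw [h1, one_mul] at h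
    rw [hsq]
    linarith

end Aux

set_option maxHeartbeats 2000000 in
/-- Linear convergence of mirror descent with quadratic objective and quadratic
distance generating function, with the optimal stepsize and rate (κ_f κ_φ̄ - 1)/(κ_f κ_φ̄ + 1). -/
theorem mirror_descent_quadratic_rate (d : ℕ) (F Φ : Matrix (Fin d) (Fin d) ℝ)
    (p : Fin d → ℝ) (r : ℝ)
    (hF : F.PosDef) (hΦ : Φ.PosDef)
    (μf Lf μφ Lφ : ℝ) (hμf : 0 < μf) (hfL : μf ≤ Lf) (hμφ : 0 < μφ) (hφL : μφ ≤ Lφ)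
    (h1 : (F - μf • (1 : Matrix (Fin d) (Fin d) ℝ)).PosSemidef)
    (h2 : (Lf • (1 : Matrix (Fin d) (Fin d) ℝ) - F).PosSemidef)
    (h3 : (Φ - μφ • (1 : Matrix (Fin d) (Fin d) ℝ)).PosSemidef)
    (h4 : (Lφ • (1 : Matrix (Fin d) (Fin d) ℝ) - Φ).PosSemidef)
    (μb Lb η ρ : ℝ) (hμb : μb = 1 / Lφ) (hLb : Lb = 1 / μφ)
    (hη : η = 2 / (Lf * Lb + μf * μb))
    (hρ : ρ = ((Lf / μf) * (Lb / μb) - 1) / ((Lf / μf) * (Lb / μb) + 1))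
    (z : ℕ → Fin d → ℝ)
    (hz : ∀ k, z (k + 1) = z k - η • (F.mulVec (Φ⁻¹.mulVec (z k)) + p))
    (xopt zopt : Fin d → ℝ)
    (hx : xopt = -(F⁻¹.mulVec p)) (hzopt : zopt = Φ.mulVec xopt) :
    ∃ c > 0, ∀ k : ℕ, ‖z k - zopt‖ ≤ c * ρ ^ k * ‖z 0 - zopt‖ := by
  have hLφ : 0 < Lφ := lt_of_lt_of_le hμφ hφL
  have hLf : 0 < Lf := lt_of_lt_of_le hμf hfL
  have hμb' : 0 < μb := by rw [hμb]; positivity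
  have hLb' : 0 < Lb := by rw [hLb]; positivity
  have hden : 0 < Lf * Lb + μf * μb := by positivity
  have hη' : 0 < η := by rw [hη]; positivity
  -- scalar identities
  have hκden : 0 < (Lf / μf) * (Lb / μb) + 1 := by positivity
  have hρ1 : 1 - ρ = η * (μf * μb) := by
    rw [hρ, hη]
    field_simp
    ring
  have hρ2 : 1 + ρ = η * (Lf * Lb) := by
    rw [hρ, hη]
    field_simp
    ring
  have hρ0 : 0 ≤ ρ := by
    rw [hρ]
    apply div_nonneg _ (le_of_lt hκden)
    have ha : 1 ≤ Lf / μf := (one_le_div hμf).2 hfL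
    have hb : 1 ≤ Lb / μb := by
      have heq : Lb / μb = Lφ / μφ := by
        rw [hLb, hμb]; field_simp
      rw [heq, one_le_div hμφ]
      exact hφL
    nlinarith
  have hμbLφ : μb * Lφ = 1 := by rw [hμb]; field_simp
  have hLbμφ : Lb * μφ = 1 := by rw [hLb]; field_simp
  -- abbreviations
  set A : Matrix (Fin d) (Fin d) ℝ := Φ⁻¹ with hA
  have hAdef : A.PosDef := hΦ.inv
  have hdetΦ : IsUnit Φ.det := hΦ.det_pos.ne'.isUnit
  have hdetF : IsUnit F.det := hF.det_pos.ne'.isUnit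
  set G : Matrix (Fin d) (Fin d) ℝ := Φ - η • F with hG
  have hGsym : G.IsHermitian := hΦ.isHermitian.sub (herm_smul η F hF.isHermitian)
  -- optimality: F *ᵥ (A *ᵥ zopt) + p = 0
  have hAz : A *ᵥ zopt = xopt := by
    rw [hzopt, hA, mulVec_mulVec, Matrix.nonsing_inv_mul Φ hdetΦ, one_mulVec]
  have hopt : F *ᵥ (A *ᵥ zopt) + p = 0 := by
    rw [hAz, hx, mulVec_neg, mulVec_mulVec, Matrix.mul_nonsing_inv F hdetF, one_mulVec]
    simp
  -- error recursion
  have hstep : ∀ k, z (k + 1) - zopt = G *ᵥ (A *ᵥ (z k - zopt)) := by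
    intro k
    have hlin : F *ᵥ (A *ᵥ z k) + p = F *ᵥ (A *ᵥ (z k - zopt)) := by
      have h0 : F *ᵥ (A *ᵥ zopt) = -p := eq_neg_of_add_eq_zero_left hopt
      rw [mulVec_sub, mulVec_sub, h0, sub_neg_eq_add]
    rw [hz k, hG]
    rw [sub_mulVec, smul_mulVec]
    have hΦA : Φ *ᵥ (A *ᵥ (z k - zopt)) = z k - zopt := by
      rw [hA, mulVec_mulVec, Matrix.mul_nonsing_inv Φ hdetΦ, one_mulVec]
    rw [hΦA, ← hlin]
    abel
  -- the two Loewner bounds, as quadratic-form inequalities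
  have hBq : ∀ x, 0 ≤ x ⬝ᵥ (ρ • Φ - G) *ᵥ x := by
    intro x
    have e1 := psd_dot h1 x
    have e4 := psd_dot h4 x
    have hid : x ⬝ᵥ (ρ • Φ - G) *ᵥ x
        = η * (x ⬝ᵥ (F - μf • (1 : Matrix (Fin d) (Fin d) ℝ)) *ᵥ x)
          + (η * (μf * μb)) * (x ⬝ᵥ (Lφ • (1 : Matrix (Fin d) (Fin d) ℝ) - Φ) *ᵥ x) := by
      simp only [hG, sub_mulVec, add_mulVec, smul_mulVec, one_mulVec,
        dotProduct_sub, dotProduct_add, dotProduct_smul, smul_eq_mul]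
      have hc1 : ρ = 1 - η * (μf * μb) := by linarith
      have hc2 : η * (μf * μb) * Lφ = η * μf := by
        have : μf * μb * Lφ = μf := by rw [mul_assoc, hμbLφ, mul_one]
        calc η * (μf * μb) * Lφ = η * (μf * μb * Lφ) := by ring
        _ = η * μf := by rw [this]
      linear_combination (x ⬝ᵥ Φ *ᵥ x) * hc1 - (x ⬝ᵥ x) * hc2
    rw [hid]
    exact add_nonneg (mul_nonneg hη'.le e1)
      (mul_nonneg (by positivity) e4)
  have hCq : ∀ x, 0 ≤ x ⬝ᵥ (ρ • Φ + G) *ᵥ x := by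
    intro x
    have e2 := psd_dot h2 x
    have e3 := psd_dot h3 x
    have hid : x ⬝ᵥ (ρ • Φ + G) *ᵥ x
        = (η * (Lf * Lb)) * (x ⬝ᵥ (Φ - μφ • (1 : Matrix (Fin d) (Fin d) ℝ)) *ᵥ x)
          + η * (x ⬝ᵥ (Lf • (1 : Matrix (Fin d) (Fin d) ℝ) - F) *ᵥ x) := by
      simp only [hG, sub_mulVec, add_mulVec, smul_mulVec, one_mulVec,
        dotProduct_sub, dotProduct_add, dotProduct_smul, smul_eq_mul]
      have hc1 : ρ = η * (Lf * Lb) - 1 := by linarith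
      have hc2 : η * (Lf * Lb) * μφ = η * Lf := by
        have : Lf * Lb * μφ = Lf := by rw [mul_assoc, hLbμφ, mul_one]
        calc η * (Lf * Lb) * μφ = η * (Lf * Lb * μφ) := by ring
        _ = η * Lf := by rw [this]
      linear_combination (x ⬝ᵥ Φ *ᵥ x) * hc1 + (x ⬝ᵥ x) * hc2
    rw [hid]
    exact add_nonneg (mul_nonneg (by positivity) e3)
      (mul_nonneg hη'.le e2)
  -- quadratic Lyapunov function
  set Q : ℕ → ℝ := fun k => (z k - zopt) ⬝ᵥ A *ᵥ (z k - zopt) with hQdef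
  have hQstep : ∀ k, Q (k + 1) ≤ ρ ^ 2 * Q k := by
    intro k
    have hkey := key_contraction Φ G hΦ hGsym ρ hρ0 hBq hCq (A *ᵥ (z k - zopt))
    have hΦA : Φ *ᵥ (A *ᵥ (z k - zopt)) = z k - zopt := by
      rw [hA, mulVec_mulVec, Matrix.mul_nonsing_inv Φ hdetΦ, one_mulVec]
    rw [hΦA] at hkey
    have hlhs : Q (k + 1) = (G *ᵥ (A *ᵥ (z k - zopt))) ⬝ᵥ Φ⁻¹ *ᵥ (G *ᵥ (A *ᵥ (z k - zopt))) := by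
      rw [hQdef]
      simp only
      rw [hstep k, hA]
    have hrhs : (A *ᵥ (z k - zopt)) ⬝ᵥ (z k - zopt) = Q k := by
      rw [hQdef]
      simp only
      rw [dotProduct_comm]
    rw [hlhs, ← hrhs]
    exact hkey
  have hQnonneg : ∀ k, 0 ≤ Q k := fun k => psd_dot hAdef.posSemidef _
  have hQk : ∀ k, Q k ≤ (ρ ^ 2) ^ k * Q 0 := by
    intro k
    induction k with
    | zero => simp
    | succ k ih =>
      calc Q (k + 1) ≤ ρ ^ 2 * Q k := hQstep k
      _ ≤ ρ ^ 2 * ((ρ ^ 2) ^ k * Q 0) := by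
          apply mul_le_mul_of_nonneg_left ih (by positivity)
      _ = (ρ ^ 2) ^ (k + 1) * Q 0 := by ring
  -- norm comparisons
  have hN1 : ∀ x : Fin d → ℝ, ‖x‖ ^ 2 ≤ x ⬝ᵥ x := by
    intro x
    have hxx : 0 ≤ x ⬝ᵥ x := by
      simp only [dotProduct]
      exact Finset.sum_nonneg fun i _ => mul_self_nonneg _
    have hnorm : ‖x‖ ≤ Real.sqrt (x ⬝ᵥ x) := by
      refine (pi_norm_le_iff_of_nonneg (Real.sqrt_nonneg _)).2 fun i => ?_
      have hle : ‖x i‖ ^ 2 ≤ x ⬝ᵥ x := by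
        simp only [Real.norm_eq_abs, sq_abs, dotProduct, pow_two, abs_mul_abs_self]
        exact Finset.single_le_sum (f := fun j => x j * x j)
          (fun j _ => mul_self_nonneg _) (Finset.mem_univ i)
      calc ‖x i‖ = Real.sqrt (‖x i‖ ^ 2) := (Real.sqrt_sq (norm_nonneg _)).symm
      _ ≤ Real.sqrt (x ⬝ᵥ x) := Real.sqrt_le_sqrt hle
    calc ‖x‖ ^ 2 ≤ Real.sqrt (x ⬝ᵥ x) ^ 2 :=
          pow_le_pow_left₀ (norm_nonneg _) hnorm 2
    _ = x ⬝ᵥ x := Real.sq_sqrt hxx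
  have hN4 : ∀ x : Fin d → ℝ, x ⬝ᵥ x ≤ (d : ℝ) * ‖x‖ ^ 2 := by
    intro x
    simp only [dotProduct]
    calc ∑ i, x i * x i ≤ ∑ _i : Fin d, ‖x‖ ^ 2 := by
          apply Finset.sum_le_sum
          intro i _
          have h := norm_le_pi_norm x i
          have : x i * x i = ‖x i‖ ^ 2 := by
            simp [Real.norm_eq_abs, sq_abs]; ring
          rw [this]
          exact pow_le_pow_left₀ (norm_nonneg _) h 2
    _ = (d : ℝ) * ‖x‖ ^ 2 := by simp [Finset.sum_const, nsmul_eq_mul]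
  -- x ⬝ᵥ x ≤ Lφ * (x ⬝ᵥ A x)
  have hN2 : ∀ x : Fin d → ℝ, x ⬝ᵥ x ≤ Lφ * (x ⬝ᵥ A *ᵥ x) := by
    intro x
    set u : Fin d → ℝ := A *ᵥ x with hu
    -- goal: x ⬝ᵥ x ≤ Lφ * (x ⬝ᵥ u)
    have hΦu : Φ *ᵥ u = x := by
      rw [hu, hA, mulVec_mulVec, Matrix.mul_nonsing_inv Φ hdetΦ, one_mulVec]
    have ham := amgm_dot Φ hΦ.isHermitian (psd_dot hΦ.posSemidef)
      (t := 1 / Lφ) (by positivity) x u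
    rw [one_div_one_div] at ham
    have hxu : x ⬝ᵥ Φ *ᵥ u = x ⬝ᵥ x := by rw [hΦu]
    have h2 : u ⬝ᵥ Φ *ᵥ u = x ⬝ᵥ u := by rw [hΦu, dotProduct_comm]
    rw [hxu, h2] at ham
    -- ham : 2 * (x ⬝ᵥ x) ≤ (1/Lφ) * (x ⬝ᵥ Φ *ᵥ x) + Lφ * (x ⬝ᵥ u)
    have hup : x ⬝ᵥ Φ *ᵥ x ≤ Lφ * (x ⬝ᵥ x) := by
      have h4x := psd_dot h4 x
      simp only [sub_mulVec, smul_mulVec, one_mulVec, dotProduct_sub,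
        dotProduct_smul, smul_eq_mul] at h4x
      linarith
    have h1L : (1 / Lφ) * (x ⬝ᵥ Φ *ᵥ x) ≤ x ⬝ᵥ x := by
      rw [div_mul_eq_mul_div, one_mul, div_le_iff₀ hLφ]
      linarith [hup]
    linarith
  -- x ⬝ᵥ A x ≤ (1/μφ) (x ⬝ᵥ x)
  have hN3 : ∀ x : Fin d → ℝ, x ⬝ᵥ A *ᵥ x ≤ (1 / μφ) * (x ⬝ᵥ x) := by
    intro x
    set u : Fin d → ℝ := A *ᵥ x with hu
    -- goal: x ⬝ᵥ u ≤ (1/μφ) * (x ⬝ᵥ x)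
    have hΦu : Φ *ᵥ u = x := by
      rw [hu, hA, mulVec_mulVec, Matrix.mul_nonsing_inv Φ hdetΦ, one_mulVec]
    have hQ0 : u ⬝ᵥ Φ *ᵥ u = x ⬝ᵥ u := by rw [hΦu, dotProduct_comm]
    have huu : μφ * (u ⬝ᵥ u) ≤ x ⬝ᵥ u := by
      have h3u := psd_dot h3 u
      simp only [sub_mulVec, smul_mulVec, one_mulVec, dotProduct_sub,
        dotProduct_smul, smul_eq_mul] at h3u
      rw [hQ0] at h3u
      linarith
    have hone : (1 : Matrix (Fin d) (Fin d) ℝ).IsHermitian := isHermitian_one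
    have honep : ∀ y : Fin d → ℝ, 0 ≤ y ⬝ᵥ (1 : Matrix (Fin d) (Fin d) ℝ) *ᵥ y := by
      intro y
      rw [one_mulVec]
      simp only [dotProduct]
      exact Finset.sum_nonneg fun i _ => mul_self_nonneg _
    have ham := amgm_dot (1 : Matrix (Fin d) (Fin d) ℝ) hone honep
      (t := 1 / μφ) (by positivity) x u
    rw [one_div_one_div] at ham
    simp only [one_mulVec] at ham
    -- ham : 2 * (x ⬝ᵥ u) ≤ (1/μφ) * (x ⬝ᵥ x) + μφ * (u ⬝ᵥ u)
    linarith
  -- assemble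
  set K : ℝ := Real.sqrt (Lφ / μφ * d) with hK
  refine ⟨K + 1, by positivity, fun k => ?_⟩
  have hρk : 0 ≤ ρ ^ k := pow_nonneg hρ0 k
  have hKnn : 0 ≤ K := Real.sqrt_nonneg _
  have hrhs_nn : 0 ≤ (K + 1) * ρ ^ k * ‖z 0 - zopt‖ := by positivity
  apply le_of_pow_le_pow_left₀ (n := 2) two_ne_zero hrhs_nn
  have hchain : ‖z k - zopt‖ ^ 2 ≤ (Lφ / μφ * d) * ((ρ ^ 2) ^ k * ‖z 0 - zopt‖ ^ 2) := by
    have c1 : ‖z k - zopt‖ ^ 2 ≤ (z k - zopt) ⬝ᵥ (z k - zopt) := hN1 _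
    have c2 : (z k - zopt) ⬝ᵥ (z k - zopt) ≤ Lφ * Q k := by
      have := hN2 (z k - zopt); rw [hQdef]; exact this
    have c3 : Lφ * Q k ≤ Lφ * ((ρ ^ 2) ^ k * Q 0) :=
      mul_le_mul_of_nonneg_left (hQk k) (le_of_lt hLφ)
    have c4 : Q 0 ≤ (1 / μφ) * ((z 0 - zopt) ⬝ᵥ (z 0 - zopt)) := hN3 _
    have c5 : (z 0 - zopt) ⬝ᵥ (z 0 - zopt) ≤ (d : ℝ) * ‖z 0 - zopt‖ ^ 2 := hN4 _
    have hρ2k : (0 : ℝ) ≤ (ρ ^ 2) ^ k := by positivity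
    have c6 : Lφ * ((ρ ^ 2) ^ k * Q 0)
        ≤ Lφ * ((ρ ^ 2) ^ k * ((1 / μφ) * ((d : ℝ) * ‖z 0 - zopt‖ ^ 2))) := by
      apply mul_le_mul_of_nonneg_left _ (le_of_lt hLφ)
      apply mul_le_mul_of_nonneg_left _ hρ2k
      calc Q 0 ≤ (1 / μφ) * ((z 0 - zopt) ⬝ᵥ (z 0 - zopt)) := c4
      _ ≤ (1 / μφ) * ((d : ℝ) * ‖z 0 - zopt‖ ^ 2) := by
          apply mul_le_mul_of_nonneg_left c5 (by positivity)
    calc ‖z k - zopt‖ ^ 2 ≤ Lφ * Q k := le_trans c1 c2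
    _ ≤ Lφ * ((ρ ^ 2) ^ k * ((1 / μφ) * ((d : ℝ) * ‖z 0 - zopt‖ ^ 2))) := le_trans c3 c6
    _ = (Lφ / μφ * d) * ((ρ ^ 2) ^ k * ‖z 0 - zopt‖ ^ 2) := by ring
  have hKsq : Lφ / μφ * d ≤ (K + 1) ^ 2 := by
    have h0 : (0 : ℝ) ≤ Lφ / μφ * d := by positivity
    have := Real.sq_sqrt h0
    nlinarith [hKnn]
  have hpowid : (ρ ^ 2) ^ k = (ρ ^ k) ^ 2 := by
    rw [← pow_mul, ← pow_mul, mul_comm]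
  calc ‖z k - zopt‖ ^ 2 ≤ (Lφ / μφ * d) * ((ρ ^ 2) ^ k * ‖z 0 - zopt‖ ^ 2) := hchain
  _ ≤ (K + 1) ^ 2 * ((ρ ^ 2) ^ k * ‖z 0 - zopt‖ ^ 2) := by
      apply mul_le_mul_of_nonneg_right hKsq (by positivity)
  _ = ((K + 1) * ρ ^ k * ‖z 0 - zopt‖) ^ 2 := by
      rw [hpowid]; ring
end

section
/- Let 0 < μ_f < L_f, 0 < μ_φ̄ < L_φ̄, η > 0. Set α₁* = (L_φ̄ − μ_φ̄)²/(4 L_f L_φ̄ μ_f μ_φ̄) and β₂* = (α₁*(L_f + μ_f) + 2√((α₁*)² L_f μ_f + α₁*))/η. Then with α₂ = 1, β₁ = 0, α₁ = α₁*, β₂ = β₂*, the polynomial p(ω) = (−η²β₂² + 2α₁η(L_f+μ_f)β₂ + 4α₁α₂ − α₁²(L_f−μ_f)² + 2α₂β₁η L_φ̄ + 2α₂β₁ημ_φ̄)ω² − β₁²ω⁴ + η²(4α₁α₂ L_f μ_f L_φ̄ μ_φ̄ − α₂²(L_φ̄−μ_φ̄)²) is identically zero; moreover there exist α₁ > α₁*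 and 0 < β₂ < β₂* such that p(ω) > 0 for all ω ∈ ℝ. -/
/-- The quartic polynomial from the frequency-domain inequality of the Sector + Popov IQC
feasibility computation for continuous-time mirror descent. -/
def freqPoly (η μf Lf μb Lb α₁ α₂ β₁ β₂ ω : ℝ) : ℝ :=
  -β₁ ^ 2 * ω ^ 4 +
    (-η ^ 2 * β₂ ^ 2 + 2 * α₁ * η * (Lf + μf) * β₂ + 4 * α₁ * α₂ -
        α₁ ^ 2 * (Lf - μf) ^ 2 + 2 * α₂ * β₁ * η * Lb + 2 * α₂ * β₁ * η * μb) * ω ^ 2 +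
    η ^ 2 * (4 * α₁ * α₂ * Lf * μf * Lb * μb - α₂ ^ 2 * (Lb - μb) ^ 2)

set_option maxHeartbeats 1000000 in
/-- Feasibility of the strict frequency-domain inequality: at (α₁*, β₂*) the polynomial is
identically zero, and nearby parameters make it strictly positive for all ω. -/
theorem freq_domain_feasibility (η μf Lf μb Lb α₁s β₂s : ℝ)
    (hη : 0 < η) (hf : 0 < μf) (hfL : μf < Lf) (hb : 0 < μb) (hbL : μb < Lb)
    (hα : α₁s = (Lb - μb) ^ 2 / (4 * Lf * Lb * μf * μb))
    (hβ : β₂s = (α₁s * (Lf + μf) + 2 * Real.sqrt (α₁s ^ 2 * Lf * μf + α₁s)) / η) :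
    (∀ ω : ℝ, freqPoly η μf Lf μb Lb α₁s 1 0 β₂s ω = 0) ∧
      ∃ α₁ > α₁s, ∃ β₂ : ℝ, 0 < β₂ ∧ β₂ < β₂s ∧
        ∀ ω : ℝ, 0 < freqPoly η μf Lf μb Lb α₁ 1 0 β₂ ω := by
  have hLf : 0 < Lf := hf.trans hfL
  have hLb : 0 < Lb := hb.trans hbL
  have hδ : 0 < Lf - μf := by linarith
  have hbm : 0 < Lb - μb := by linarith
  have hD : 0 < 4 * Lf * Lb * μf * μb := by positivity
  have hA : 0 < α₁s := by rw [hα]; exact div_pos (by positivity) hD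
  have hkey : 4 * α₁s * Lf * μf * Lb * μb = (Lb - μb) ^ 2 := by
    rw [hα]; field_simp
  set s := Real.sqrt (α₁s ^ 2 * Lf * μf + α₁s) with hsdef
  have hargpos : 0 < α₁s ^ 2 * Lf * μf + α₁s := by positivity
  have hs : 0 < s := Real.sqrt_pos.mpr hargpos
  have hs2 : s ^ 2 = α₁s ^ 2 * Lf * μf + α₁s := Real.sq_sqrt hargpos.le
  have hβ' : η * β₂s = α₁s * (Lf + μf) + 2 * s := by
    rw [hβ]; field_simp
  constructor
  · intro ω
    unfold freqPoly
    linear_combination ω ^ 2 * ((α₁s * (Lf + μf) - 2 * s - η * β₂s) * hβ' - 4 * hs2)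
      + η ^ 2 * hkey
  · set ε := s / (Lf - μf) with hεdef
    have hε : 0 < ε := div_pos hs hδ
    have hεδ : ε * (Lf - μf) = s := div_mul_cancel₀ s hδ.ne'
    refine ⟨α₁s + ε, by linarith, (α₁s * (Lf + μf) + s) / η, ?_, ?_, ?_⟩
    · exact div_pos (by nlinarith) hη
    · rw [hβ]
      exact (div_lt_div_iff_of_pos_right hη).mpr (by linarith)
    · intro ω
      unfold freqPoly
      have hβ2' : η * ((α₁s * (Lf + μf) + s) / η) = α₁s * (Lf + μf) + s := by
        field_simp
    -- coefficient of ω²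
      have hCid : -η ^ 2 * ((α₁s * (Lf + μf) + s) / η) ^ 2
          + 2 * (α₁s + ε) * η * (Lf + μf) * ((α₁s * (Lf + μf) + s) / η)
          + 4 * (α₁s + ε) * 1 - (α₁s + ε) ^ 2 * (Lf - μf) ^ 2
          = 2 * s ^ 2 + 8 * ε * α₁s * Lf * μf + 2 * ε * (Lf + μf) * s + 4 * ε := by
        have hεδ2 : (ε * (Lf - μf)) ^ 2 = s ^ 2 := by rw [hεδ]
        have h1 : η ^ 2 * ((α₁s * (Lf + μf) + s) / η) ^ 2
            = (α₁s * (Lf + μf) + s) ^ 2 := by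
          rw [div_pow]; field_simp
        linear_combination (-1) * h1 + (2 * (α₁s + ε) * (Lf + μf)) * hβ2' - 4 * hs2 - hεδ2
      have hC : 0 < -η ^ 2 * ((α₁s * (Lf + μf) + s) / η) ^ 2
          + 2 * (α₁s + ε) * η * (Lf + μf) * ((α₁s * (Lf + μf) + s) / η)
          + 4 * (α₁s + ε) * 1 - (α₁s + ε) ^ 2 * (Lf - μf) ^ 2 := by
        rw [hCid]
        have h2 : 0 < ε * α₁s * Lf * μf := by positivity
        nlinarith [mul_pos hε hs, sq_nonneg s, hs]
      have hK : 0 < η ^ 2 * (4 * (α₁s + ε) * 1 * Lf * μf * Lb * μb - 1 ^ 2 * (Lb - μb) ^ 2) := by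
        have h3 : 0 < ε * Lf * μf * Lb * μb := by positivity
        have h4 : η ^ 2 * (4 * (α₁s + ε) * 1 * Lf * μf * Lb * μb - 1 ^ 2 * (Lb - μb) ^ 2)
            = 4 * η ^ 2 * (ε * Lf * μf * Lb * μb) := by linear_combination η ^ 2 * hkey
        rw [h4]; positivity
      linarith [mul_nonneg hC.le (sq_nonneg ω), hK]
end
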